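/- Let G be a finite nilpotent group having at least three distinct maximal subgroups. Then Γ(G) contains a triangle: there exist three non-trivial proper subgroups M₁, M₂, M₃ of G, pairwise distinct, with M₁M₂ = M₂M₃ = M₃M₁ = G. In particular, the girth of Γ(G) equals 3. -/

import Mathlib

open scoped Pointwise

/-- The co-maximal subgroup graph `Γ(G)`: vertices are the non-trivial proper
subgroups of `G`, and two distinct vertices `H`, `K` are adjacent iff `HK = G`
as a setwise product. -/
def comaximalGraph (G : Type*) [Group G] :
    SimpleGraph {H : Subgroup G // H ≠ ⊥ ∧ H ≠ ⊤} where
  Adj H K := H ≠ K ∧ ((H.1 : Set G) * (K.1 : Set G) = Set.univ)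
  symm := by
    constructor
    rintro H K ⟨hne, hmul⟩
    refine ⟨hne.symm, ?_⟩
    have h := congrArg (fun s : Set G => s⁻¹) hmul
    simpa [mul_inv_rev] using h
  loopless := by
    constructor
    rintro H ⟨hne, _⟩
    exact hne rfl

lemma coatom_sup_eq_top {G : Type*} [Group G] {M N : Subgroup G}
    (hM : IsCoatom M) (hN : IsCoatom N) (hne : M ≠ N) : M ⊔ N = ⊤ := by
  by_contra h
  have h1 : M ⊔ N = M := by
    rcases lt_or_eq_of_le (le_sup_left : M ≤ M ⊔ N) with hlt | heq
    · exact absurd (hM.2 _ hlt) h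
    · exact heq.symm
  have hNM : N ≤ M := h1 ▸ le_sup_right
  rcases lt_or_eq_of_le hNM with hlt | heq
  · exact hM.1 (hN.2 _ hlt)
  · exact hne heq.symm

lemma coatom_mul_eq_univ {G : Type*} [Group G] [Finite G] [Group.IsNilpotent G]
    {M N : Subgroup G} (hM : IsCoatom M) (hN : IsCoatom N) (hne : M ≠ N) :
    (M : Set G) * (N : Set G) = Set.univ := by
  have hnc : NormalizerCondition G := normalizerCondition_of_isNilpotent
  have : N.Normal := Subgroup.NormalizerCondition.normal_of_coatom N hnc hN
  have h := Subgroup.mul_normal M N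
  rw [coatom_sup_eq_top hM hN hne] at h
  simpa using h.symm

lemma coatom_ne_bot {G : Type*} [Group G] {M N : Subgroup G}
    (hM : IsCoatom M) (hN : IsCoatom N) (hne : M ≠ N) : M ≠ ⊥ := by
  rintro rfl
  rcases hM.2 N (bot_lt_iff_ne_bot.2 fun h => hne h.symm) with h
  exact hN.1 h

/-- A finite nilpotent group with at least three distinct maximal subgroups has
a triangle in `Γ(G)`; in particular the girth of `Γ(G)` is `3`. -/
theorem comaximal_girth_three_of_three_maximal {G : Type*} [Group G] [Finite G]
    [Group.IsNilpotent G]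
    (h3 : ∃ M₁ M₂ M₃ : Subgroup G, IsCoatom M₁ ∧ IsCoatom M₂ ∧ IsCoatom M₃ ∧
      M₁ ≠ M₂ ∧ M₂ ≠ M₃ ∧ M₁ ≠ M₃) :
    (∃ M₁ M₂ M₃ : Subgroup G,
      (M₁ ≠ ⊥ ∧ M₁ ≠ ⊤) ∧ (M₂ ≠ ⊥ ∧ M₂ ≠ ⊤) ∧ (M₃ ≠ ⊥ ∧ M₃ ≠ ⊤) ∧
      M₁ ≠ M₂ ∧ M₂ ≠ M₃ ∧ M₁ ≠ M₃ ∧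
      (M₁ : Set G) * (M₂ : Set G) = Set.univ ∧
      (M₂ : Set G) * (M₃ : Set G) = Set.univ ∧
      (M₃ : Set G) * (M₁ : Set G) = Set.univ) ∧
    (comaximalGraph G).egirth = 3 := by
  obtain ⟨M₁, M₂, M₃, h1, h2, h3c, h12, h23, h13⟩ := h3
  have hb1 : M₁ ≠ ⊥ := coatom_ne_bot h1 h2 h12
  have hb2 : M₂ ≠ ⊥ := coatom_ne_bot h2 h3c h23
  have hb3 : M₃ ≠ ⊥ := coatom_ne_bot h3c h1 (Ne.symm h13)
  have p12 : (M₁ : Set G) * (M₂ : Set G) = Set.univ := coatom_mul_eq_univ h1 h2 h12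
  have p23 : (M₂ : Set G) * (M₃ : Set G) = Set.univ := coatom_mul_eq_univ h2 h3c h23
  have p31 : (M₃ : Set G) * (M₁ : Set G) = Set.univ := coatom_mul_eq_univ h3c h1 (Ne.symm h13)
  refine ⟨⟨M₁, M₂, M₃, ⟨hb1, h1.1⟩, ⟨hb2, h2.1⟩, ⟨hb3, h3c.1⟩, h12, h23, h13,
    p12, p23, p31⟩, ?_⟩
  -- the girth part
  set v₁ : {H : Subgroup G // H ≠ ⊥ ∧ H ≠ ⊤} := ⟨M₁, hb1, h1.1⟩
  set v₂ : {H : Subgroup G // H ≠ ⊥ ∧ H ≠ ⊤} := ⟨M₂, hb2, h2.1⟩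
  set v₃ : {H : Subgroup G // H ≠ ⊥ ∧ H ≠ ⊤} := ⟨M₃, hb3, h3c.1⟩
  have n12 : v₁ ≠ v₂ := fun h => h12 (congrArg Subtype.val h)
  have n23 : v₂ ≠ v₃ := fun h => h23 (congrArg Subtype.val h)
  have n13 : v₁ ≠ v₃ := fun h => h13 (congrArg Subtype.val h)
  have a12 : (comaximalGraph G).Adj v₁ v₂ := ⟨n12, p12⟩
  have a23 : (comaximalGraph G).Adj v₂ v₃ := ⟨n23, p23⟩
  have a31 : (comaximalGraph G).Adj v₃ v₁ := ⟨fun h => n13 h.symm, p31⟩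
  let w : (comaximalGraph G).Walk v₁ v₁ :=
    .cons a12 (.cons a23 (.cons a31 .nil))
  have hw : w.IsCycle := by
    simp only [w, SimpleGraph.Walk.isCycle_def, SimpleGraph.Walk.isTrail_def,
      SimpleGraph.Walk.edges_cons, SimpleGraph.Walk.edges_nil,
      SimpleGraph.Walk.support_cons, SimpleGraph.Walk.support_nil]
    constructor
    · simp only [List.nodup_cons, List.mem_cons, List.mem_singleton, List.not_mem_nil,
        List.nodup_nil, and_true, or_false, not_or, Sym2.eq_iff]
      have e1 := n12; have e2 := n23; have e3 := n13
      tauto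
    · refine ⟨by simp, ?_⟩
      simp only [SimpleGraph.Walk.support_cons, SimpleGraph.Walk.support_nil, List.tail_cons,
        List.nodup_cons, List.mem_cons, List.mem_singleton, List.not_mem_nil, List.nodup_nil,
        and_true, or_false, not_or]
      have e1 := n12; have e2 := n23; have e3 := n13
      tauto
  refine le_antisymm ?_ SimpleGraph.three_le_egirth
  have : (comaximalGraph G).egirth ≤ w.length := by
    rw [SimpleGraph.egirth]
    exact iInf_le_of_le v₁ (iInf_le_of_le w (iInf_le_of_le hw le_rfl))
  simpa [w] using this
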